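/- Let h_CD, h_CB, h_SC, h_SB, p_S, σ_B², σ_C², σ_D², P_C > 0, β ≥ 0, λ ∈ [0,1], and let R̃_B ∈ [0, log₂(1 + P_C·h_CB/(p_S·h_SB + σ_B²))]. Set L = (p_S·h_SB + σ_B²)(2^{R̃_B} − 1)/h_CB, R_{CD,S}(x) = log₂(1 − (1 − 2^{−R̃_B})·h_CD·(p_S·h_SB + σ_B²)/(h_CB·σ_D²) + (2^{−R̃_B}·h_CD/σ_D²)·x), R_{SC}(x) = log₂(1 + p_S·h_SC/(β·x^λ + σ_C²)), and D(x) = min(R_{SC}(x), R_{CD,S}(x)). Then L ≤ P_C, and the maximum of D over [L, P_C] is attained at: x = L if R_{CD,S}(L) ≥ R_{SC}(L); x = P_C if R_{CD,S}(P_C) ≤ R_{SC}(P_C); and otherwise at the unique p̂ ∈ (L, P_C) satisfying R_{CD,S}(p̂) = R_{SC}(p̂), in which case max D = R_{CD,S}(p̂) = R_{SC}(p̂). -/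
import Mathlib


open Set Real

/-- Theorem 1: characterization of the power achieving the Pareto
boundary of the achievable rate region. -/
theorem pareto_boundary_power_allocation
    (hCD hCB hSC hSB pS σB2 σC2 σD2 PC β lam RB : ℝ)
    (hhCD : 0 < hCD) (hhCB : 0 < hCB) (hhSC : 0 < hSC) (hhSB : 0 < hSB)
    (hpS : 0 < pS) (hσB : 0 < σB2) (hσC : 0 < σC2) (hσD : 0 < σD2) (hPC : 0 < PC)
    (hβ : 0 ≤ β) (hlam : lam ∈ Icc (0 : ℝ) 1)
    (hRB : RB ∈ Icc 0 (logb 2 (1 + PC * hCB / (pS * hSB + σB2)))) :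
    let L : ℝ := (pS * hSB + σB2) * ((2 : ℝ) ^ RB - 1) / hCB
    let RCDS : ℝ → ℝ := fun x =>
      logb 2 (1 - (1 - (2 : ℝ) ^ (-RB)) * hCD * (pS * hSB + σB2) / (hCB * σD2)
        + ((2 : ℝ) ^ (-RB) * hCD / σD2) * x)
    let RSC : ℝ → ℝ := fun x => logb 2 (1 + pS * hSC / (β * x ^ lam + σC2))
    let D : ℝ → ℝ := fun x => min (RSC x) (RCDS x)
    L ≤ PC ∧
    ((RSC L ≤ RCDS L) → ∀ x ∈ Icc L PC, D x ≤ D L) ∧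
    ((RCDS PC ≤ RSC PC) → ∀ x ∈ Icc L PC, D x ≤ D PC) ∧
    ((RCDS L < RSC L ∧ RSC PC < RCDS PC) →
      ∃ p ∈ Ioo L PC, RCDS p = RSC p ∧
        (∀ p' ∈ Ioo L PC, RCDS p' = RSC p' → p' = p) ∧
        (∀ x ∈ Icc L PC, D x ≤ D p) ∧ D p = RCDS p ∧ D p = RSC p) := by
  intro L RCDS RSC D
  have hS : 0 < pS * hSB + σB2 := by positivity
  have h2RB : (1 : ℝ) ≤ (2 : ℝ) ^ RB := by
    have h := (Real.rpow_le_rpow_left_iff (x := 2) (y := 0) (z := RB) one_lt_two).mpr hRB.1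
    rwa [Real.rpow_zero] at h
  have h2pos : (0 : ℝ) < (2 : ℝ) ^ RB := Real.rpow_pos_of_pos two_pos _
  have hmul : (2 : ℝ) ^ (-RB) * (2 : ℝ) ^ RB = 1 := by
    rw [← Real.rpow_add two_pos]; simp
  have h2neg : (0 : ℝ) < (2 : ℝ) ^ (-RB) := Real.rpow_pos_of_pos two_pos _
  have hL0 : 0 ≤ L := by
    have h : (0 : ℝ) ≤ (pS * hSB + σB2) * ((2 : ℝ) ^ RB - 1) := by nlinarith
    exact div_nonneg h hhCB.le
  -- L ≤ PC
  have hLPC : L ≤ PC := by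
    have h1 : (2 : ℝ) ^ RB ≤ (2 : ℝ) ^ logb 2 (1 + PC * hCB / (pS * hSB + σB2)) :=
      (Real.rpow_le_rpow_left_iff one_lt_two).mpr hRB.2
    have harg : (0 : ℝ) < 1 + PC * hCB / (pS * hSB + σB2) := by positivity
    rw [Real.rpow_logb two_pos (by norm_num) harg] at h1
    have h2 : (pS * hSB + σB2) * ((2 : ℝ) ^ RB - 1) ≤ PC * hCB := by
      have h3 := mul_le_mul_of_nonneg_left h1 hS.le
      rw [mul_add, mul_one, mul_div_cancel₀ _ (ne_of_gt hS)] at h3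
      nlinarith
    rw [div_le_iff₀ hhCB]; linarith
  set c : ℝ := (2 : ℝ) ^ (-RB) * hCD / σD2 with hc_def
  have hc : 0 < c := by positivity
  -- the argument of RCDS equals 1 + c * (x - L)
  have hinner : ∀ x : ℝ,
      1 - (1 - (2 : ℝ) ^ (-RB)) * hCD * (pS * hSB + σB2) / (hCB * σD2)
        + ((2 : ℝ) ^ (-RB) * hCD / σD2) * x = 1 + c * (x - L) := by
    intro x
    rw [hc_def]
    show _ = 1 + (2 : ℝ) ^ (-RB) * hCD / σD2 * (x - (pS * hSB + σB2) * ((2 : ℝ) ^ RB - 1) / hCB)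
    linear_combination (hCD * (pS * hSB + σB2) / (hCB * σD2)) * hmul
  have hRCDS_eq : ∀ x : ℝ, RCDS x = logb 2 (1 + c * (x - L)) := by
    intro x; show logb 2 _ = _; rw [hinner x]
  -- positivity of arguments
  have hargC : ∀ x : ℝ, L ≤ x → (0 : ℝ) < 1 + c * (x - L) := by
    intro x hx; nlinarith
  have hdenpos : ∀ x : ℝ, 0 ≤ x → (0 : ℝ) < β * x ^ lam + σC2 := by
    intro x hx
    have : (0 : ℝ) ≤ x ^ lam := Real.rpow_nonneg hx _
    nlinarith
  have hargS : ∀ x : ℝ, 0 ≤ x → (1 : ℝ) < 1 + pS * hSC / (β * x ^ lam + σC2) := by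
    intro x hx
    have h := hdenpos x hx
    have : 0 < pS * hSC / (β * x ^ lam + σC2) := by positivity
    linarith
  -- RCDS strictly monotone on [L, ∞)
  have hRCDS_mono : ∀ x y : ℝ, L ≤ x → x ≤ y → RCDS x ≤ RCDS y := by
    intro x y hx hxy
    rw [hRCDS_eq, hRCDS_eq]
    exact Real.logb_le_logb_of_le one_lt_two (hargC x hx) (by nlinarith)
  have hRCDS_strict : ∀ x y : ℝ, L ≤ x → x < y → RCDS x < RCDS y := by
    intro x y hx hxy
    rw [hRCDS_eq, hRCDS_eq]
    exact Real.logb_lt_logb one_lt_two (hargC x hx) (by nlinarith)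
  -- RSC antitone on [0, ∞)
  have hRSC_anti : ∀ x y : ℝ, 0 ≤ x → x ≤ y → RSC y ≤ RSC x := by
    intro x y hx hxy
    have hxl : x ^ lam ≤ y ^ lam := Real.rpow_le_rpow hx hxy hlam.1
    have hdx := hdenpos x hx
    have hdy := hdenpos y (hx.trans hxy)
    refine Real.logb_le_logb_of_le one_lt_two (by positivity) ?_
    have : pS * hSC / (β * y ^ lam + σC2) ≤ pS * hSC / (β * x ^ lam + σC2) := by
      apply div_le_div_of_nonneg_left (by positivity) hdx
      nlinarith
    linarith
  -- RCDS L = 0 and RSC is positive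
  have hRCDSL : RCDS L = 0 := by
    rw [hRCDS_eq]; simp
  have hRSC_pos : ∀ x : ℝ, 0 ≤ x → 0 < RSC x := by
    intro x hx
    exact Real.logb_pos one_lt_two (hargS x hx)
  refine ⟨hLPC, ?_, ?_, ?_⟩
  · -- branch 1: hypothesis is contradictory
    intro h
    exact absurd h (not_le.mpr (by rw [hRCDSL]; exact hRSC_pos L hL0))
  · -- branch 2
    intro h x hx
    have h1 : D x ≤ RCDS x := min_le_right _ _
    have h2 : RCDS x ≤ RCDS PC := hRCDS_mono x PC hx.1 hx.2
    have h3 : D PC = RCDS PC := min_eq_right h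
    rw [h3]; linarith
  · -- branch 3
    rintro ⟨h1, h2⟩
    have hLltPC : L < PC := by
      rcases eq_or_lt_of_le hLPC with heq | hlt
      · rw [heq] at h1; linarith
      · exact hlt
    -- continuity of f = RCDS - RSC on [L, PC]
    have hsub : Icc L PC ⊆ {x : ℝ | 0 ≤ x} := fun x hx => hL0.trans hx.1
    have hcontC : ContinuousOn RCDS (Icc L PC) := by
      have : ContinuousOn (fun x : ℝ => 1 + c * (x - L)) (Icc L PC) :=
        (continuous_const.add (continuous_const.mul (continuous_id.sub continuous_const))).continuousOn
      have hlog : ContinuousOn (fun x : ℝ => Real.log (1 + c * (x - L))) (Icc L PC) :=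
        this.log (fun x hx => ne_of_gt (hargC x hx.1))
      have : ContinuousOn (fun x : ℝ => Real.logb 2 (1 + c * (x - L))) (Icc L PC) := by
        simp only [Real.logb]
        exact hlog.div_const _
      refine this.congr ?_
      intro x hx; exact hRCDS_eq x
    have hcontpow : ContinuousOn (fun x : ℝ => x ^ lam) (Icc L PC) := by
      rcases eq_or_lt_of_le hlam.1 with heq | hpos
      · have : (fun x : ℝ => x ^ lam) = fun _ : ℝ => (1 : ℝ) := by
          funext x; rw [← heq, Real.rpow_zero]
        rw [this]; exact continuousOn_const
      · intro x hx
        exact (Real.continuousAt_rpow_const x lam (Or.inr hlam.1)).continuousWithinAt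
    have hcontS : ContinuousOn RSC (Icc L PC) := by
      have hden : ContinuousOn (fun x : ℝ => β * x ^ lam + σC2) (Icc L PC) :=
        (continuousOn_const.mul hcontpow).add continuousOn_const
      have harg : ContinuousOn (fun x : ℝ => 1 + pS * hSC / (β * x ^ lam + σC2)) (Icc L PC) :=
        continuousOn_const.add (continuousOn_const.div hden
          (fun x hx => ne_of_gt (hdenpos x (hsub hx))))
      have hlog : ContinuousOn (fun x : ℝ => Real.log (1 + pS * hSC / (β * x ^ lam + σC2)))
          (Icc L PC) :=
        harg.log (fun x hx => by have := hargS x (hsub hx); linarith)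
      show ContinuousOn (fun x : ℝ => Real.logb 2 (1 + pS * hSC / (β * x ^ lam + σC2))) (Icc L PC)
      simp only [Real.logb]
      exact hlog.div_const _
    set f : ℝ → ℝ := fun x => RCDS x - RSC x with hf_def
    have hcontf : ContinuousOn f (Icc L PC) := hcontC.sub hcontS
    have hivt := intermediate_value_Ioo hLPC hcontf
    have h0mem : (0 : ℝ) ∈ Ioo (f L) (f PC) := ⟨by simp only [hf_def]; linarith,
      by simp only [hf_def]; linarith⟩
    obtain ⟨p, hpmem, hfp⟩ := hivt h0mem
    have hpeq : RCDS p = RSC p := by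
      have : RCDS p - RSC p = 0 := hfp
      linarith
    -- strict monotonicity of f for uniqueness
    have hfstrict : ∀ x y : ℝ, x ∈ Icc L PC → y ∈ Icc L PC → x < y → f x < f y := by
      intro x y hx hy hxy
      have h1 := hRCDS_strict x y hx.1 hxy
      have h2 := hRSC_anti x y (hsub hx) hxy.le
      simp only [hf_def]; linarith
    refine ⟨p, hpmem, hpeq, ?_, ?_, ?_, ?_⟩
    · -- uniqueness
      intro p' hp' hp'eq
      by_contra hne
      rcases lt_or_gt_of_ne hne with hlt | hgt
      · have := hfstrict p' p (Ioo_subset_Icc_self hp') (Ioo_subset_Icc_self hpmem) hlt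
        simp only [hf_def] at this; rw [hp'eq, hpeq] at this; linarith
      · have := hfstrict p p' (Ioo_subset_Icc_self hpmem) (Ioo_subset_Icc_self hp') hgt
        simp only [hf_def] at this; rw [hp'eq, hpeq] at this; linarith
    · -- maximality
      intro x hx
      have hDp : D p = RCDS p := min_eq_right (hpeq.le)
      rcases le_total x p with hle | hge
      · have : RCDS x ≤ RCDS p := hRCDS_mono x p hx.1 hle
        have hm : D x ≤ RCDS x := min_le_right _ _
        rw [hDp]; linarith
      · have : RSC x ≤ RSC p := hRSC_anti p x (hL0.trans hpmem.1.le) hge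
        have hm : D x ≤ RSC x := min_le_left _ _
        rw [hDp, hpeq]; linarith
    · exact min_eq_right (hpeq.le)
    · exact min_eq_left hpeq.ge
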